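/- An 𝔽_p-linear bijection A of M × M commutes with diag(m_a, m_a) for every a ∈ R if and only if there exist c₁, c₂, c₃, c₄ ∈ M such that A(x,y) = (c₁x + c₂y, c₃x + c₄y) for all (x,y) ∈ M × M; moreover this centralizer of S_R in GL(M × M) coincides with the centralizer of the full group S = {diag(m_a, m_a) : a ∈ M^×}. -/

import Mathlib

theorem stmt_7 (p m p' : ℕ) (hp : Nat.Prime p) (hp2 : p ≠ 2) (hm : 2 < m)
    (K : Type) [Field K] [Fintype K] (hcard : Fintype.card K = p ^ m)
    (hp' : Nat.Prime p') (hdvd : p' ∣ p ^ m - 1)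
    (hprim : ∀ i : ℕ, 1 ≤ i → i ≤ m - 1 → ¬ p' ∣ p ^ i - 1)
    (A : K × K ≃+ K × K) :
    ((∀ a : K, a ≠ 0 → (∃ j : ℕ, orderOf a = p' ^ j) →
        ∀ z : K × K, A (a * z.1, a * z.2) = (a * (A z).1, a * (A z).2)) ↔
      ∃ c₁ c₂ c₃ c₄ : K, ∀ x y : K, A (x, y) = (c₁ * x + c₂ * y, c₃ * x + c₄ * y)) ∧
    ((∀ a : K, a ≠ 0 → (∃ j : ℕ, orderOf a = p' ^ j) →
        ∀ z : K × K, A (a * z.1, a * z.2) = (a * (A z).1, a * (A z).2)) ↔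
      (∀ a : K, a ≠ 0 →
        ∀ z : K × K, A (a * z.1, a * z.2) = (a * (A z).1, a * (A z).2))) := by
  classical
  -- Characteristic of K is p
  have hchar : CharP K p := by
    haveI : CharP K (ringChar K) := ringChar.charP K
    have hrc : Nat.Prime (ringChar K) := CharP.char_is_prime K (ringChar K)
    obtain ⟨n, -, hn⟩ := FiniteField.card K (ringChar K)
    have : ringChar K ∣ p ^ m := by
      rw [← hcard, hn]
      exact dvd_pow_self _ n.ne_zero
    have : ringChar K = p :=
      ((Nat.prime_dvd_prime_iff_eq hrc hp).mp (hrc.dvd_of_dvd_pow this))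
    rwa [this] at ‹CharP K (ringChar K)›
  haveI := hchar
  -- main step: the hypothesis implies commutation with every scalar
  have main : (∀ a : K, a ≠ 0 → (∃ j : ℕ, orderOf a = p' ^ j) →
        ∀ z : K × K, A (a * z.1, a * z.2) = (a * (A z).1, a * (A z).2)) →
      ∀ b : K, ∀ z : K × K, A (b * z.1, b * z.2) = (b * (A z).1, b * (A z).2) := by
    intro h
    -- the set of commuting scalars is a subfield
    set C : Subfield K :=
      { carrier := {b : K | ∀ z : K × K, A (b * z.1, b * z.2) = (b * (A z).1, b * (A z).2)}
        zero_mem' := by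
          intro z
          simp only [zero_mul]
          have : ((0 : K), (0 : K)) = (0 : K × K) := rfl
          rw [this, map_zero]
        one_mem' := by intro z; simp
        add_mem' := by
          intro b c hb hc z
          have h1 : ((b + c) * z.1, (b + c) * z.2)
              = ((b * z.1, b * z.2) + (c * z.1, c * z.2) : K × K) := by
            simp [Prod.ext_iff, add_mul]
          rw [h1, map_add, hb z, hc z]
          simp [Prod.ext_iff, add_mul]
        mul_mem' := by
          intro b c hb hc z
          have h2 := hb (c * z.1, c * z.2)
          rw [hc z] at h2
          simpa only [mul_assoc] using h2
        neg_mem' := by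
          intro b hb z
          have h1 : ((-b) * z.1, (-b) * z.2) = (-(b * z.1, b * z.2) : K × K) := by
            simp [Prod.ext_iff]
          rw [h1, map_neg, hb z]
          simp [Prod.ext_iff]
        inv_mem' := by
          intro b hb
          rcases eq_or_ne b 0 with rfl | hb0
          · intro z
            simp only [inv_zero, zero_mul]
            have : ((0 : K), (0 : K)) = (0 : K × K) := rfl
            rw [this, map_zero]
          · intro z
            have h2 := hb (b⁻¹ * z.1, b⁻¹ * z.2)
            simp only [mul_inv_cancel_left₀ hb0] at h2
            rw [Prod.mk.eta] at h2
            rw [h2]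
            simp [inv_mul_cancel_left₀ hb0] } with hCdef
    -- an element of order p'
    haveI : Fact (Nat.Prime p') := ⟨hp'⟩
    have hdvdu : p' ∣ Fintype.card Kˣ := by
      rw [Fintype.card_units, hcard]; exact hdvd
    obtain ⟨u, hu⟩ := exists_prime_orderOf_dvd_card p' hdvdu
    have haC : (u : K) ∈ C := h u u.ne_zero ⟨1, by rw [pow_one, orderOf_units, hu]⟩
    -- C is a finite field of cardinality p ^ d
    haveI : Fintype C := Fintype.ofFinite C
    haveI : CharP C p := (C.subtype.charP_iff Subtype.val_injective p).mpr hchar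
    obtain ⟨d, -, hd⟩ := FiniteField.card C p
    -- p' divides p ^ d - 1
    have hordC : orderOf ((⟨u, haC⟩ : C)) = p' := by
      rw [← hu, ← orderOf_units]
      exact (orderOf_injective C.subtype.toMonoidHom Subtype.val_injective ⟨↑u, haC⟩).symm
    have hdvd' : p' ∣ p ^ (d : ℕ) - 1 := by
      rw [← hd, ← hordC]
      apply orderOf_dvd_of_pow_eq_one
      exact FiniteField.pow_card_sub_one_eq_one _ (by
        simp only [ne_eq, Subtype.ext_iff, ZeroMemClass.coe_zero]
        exact u.ne_zero)
    -- cardinality comparison : m = d * finrank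
    have hcard2 : Fintype.card K = Fintype.card C ^ Module.finrank C K :=
      Module.card_eq_pow_finrank
    rw [hcard, hd, ← pow_mul] at hcard2
    have hm' : m = (d : ℕ) * Module.finrank C K :=
      Nat.pow_right_injective hp.two_le hcard2
    have hfr : Module.finrank C K ≠ 0 := by
      intro h0
      rw [h0, mul_zero] at hm'; omega
    have hdlem : (d : ℕ) ≤ m := by
      rw [hm']
      exact Nat.le_mul_of_pos_right _ (Nat.pos_of_ne_zero hfr)
    have hdm : (d : ℕ) = m := by
      by_contra hne
      exact hprim d d.one_le (by omega) hdvd'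
    -- hence C = K
    have hsurj : Function.Surjective ((↑) : C → K) := by
      have : Function.Bijective ((↑) : C → K) :=
        (Fintype.bijective_iff_injective_and_card _).mpr
          ⟨Subtype.val_injective, by rw [hd, hdm, hcard]⟩
      exact this.2
    intro b z
    obtain ⟨⟨b', hb'⟩, rfl⟩ := hsurj b
    exact hb' z
  refine ⟨⟨?_, ?_⟩, ?_, ?_⟩
  · intro h
    have hb := main h
    refine ⟨(A (1, 0)).1, (A (0, 1)).1, (A (1, 0)).2, (A (0, 1)).2, ?_⟩
    intro x y
    have hx := hb x (1, 0)
    have hy := hb y (0, 1)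
    simp only [mul_one, mul_zero] at hx hy
    have hxy : ((x, y) : K × K) = (x, 0) + (0, y) := by simp
    rw [hxy, map_add, hx, hy]
    simp [Prod.ext_iff]
    constructor <;> ring
  · rintro ⟨c₁, c₂, c₃, c₄, hc⟩ a ha hj ⟨x, y⟩
    simp only [hc]
    simp [Prod.ext_iff]
    constructor <;> ring
  · intro h a ha z
    exact main h a z
  · intro h a ha hj z
    exact h a ha z
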